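/- Fix odd q ≥ 3, c = (q−1)/2, and φ-parameter cos(π/q). For x ∈ (Z/qZ)^n lying in the sphere S_u^1 (exactly u coordinates equal ±1, the remaining n−u equal 0), the Fourier transform of the indicator of the sphere S_ℓ^c (exactly ℓ coordinates equal ±c, the rest 0) evaluates as: 1̂_{S_ℓ^c}(x) = Σ_{j=0}^ℓ C(u,j) C(n−u, ℓ−j) (−1)^j 2^ℓ cos(π/q)^j = (2cos(π/q))^ℓ · K_ℓ(u; q'), where q' = 1 + 1/cos(π/q) and K_ℓ(u;q') = Σ_j C(u,j) C(n−u,ℓ−j) (−1)^j (q'−1)^{ℓ−j} is the Krawtchouk polynomial with parameter q'. -/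

import Mathlib

open Finset Real
set_option maxRecDepth 8000

/-- Fourier transform on `(ZMod q)^n`. -/
noncomputable def ft {q n : ℕ} [NeZero q] (f : (Fin n → ZMod q) → ℝ)
    (ω : Fin n → ZMod q) : ℂ :=
  ∑ x : Fin n → ZMod q, (f x : ℂ) *
    Complex.exp (2 * Real.pi * Complex.I * (((∑ i, ω i * x i : ZMod q)).val : ℂ) / q)

/-- The Krawtchouk polynomial `K_ℓ(u; q')` of the Hamming scheme of length `n`, with
(possibly non-integer) parameter `q'`. -/
noncomputable def Kr (n ℓ u : ℕ) (q' : ℝ) : ℝ :=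
  ∑ j ∈ Finset.range (ℓ + 1),
    (u.choose j : ℝ) * ((n - u).choose (ℓ - j) : ℝ) * (-1) ^ j * (q' - 1) ^ (ℓ - j)

/-- Indicator of the sphere `S_ℓ^a`: exactly `ℓ` coordinates equal to `±a`, the remaining
`n - ℓ` equal to `0`. -/
def sphInd {q : ℕ} (n ℓ : ℕ) (a : ZMod q) (y : Fin n → ZMod q) : ℝ :=
  if (Finset.univ.filter fun i => y i = a ∨ y i = -a).card = ℓ ∧
     (Finset.univ.filter fun i => y i = 0).card = n - ℓ then 1 else 0

lemma chi_sum {q : ℕ} [NeZero q] {ι : Type*} (s : Finset ι) (f : ι → ZMod q) :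
    ZMod.stdAddChar (∑ i ∈ s, f i) = ∏ i ∈ s, ZMod.stdAddChar (f i) := by
  classical
  induction s using Finset.cons_induction with
  | empty => simp
  | cons a s ha ih => rw [Finset.sum_cons, Finset.prod_cons, AddChar.map_add_eq_mul, ih]

lemma cover {α : Type*} [Fintype α] {p r : α → Prop} [DecidablePred p] [DecidablePred r]
    (hdis : ∀ a, p a → r a → False)
    (hcard : (Finset.univ.filter p).card + (Finset.univ.filter r).card = Fintype.card α) :
    ∀ a, p a ∨ r a := by
  classical
  have hdisj : Disjoint (Finset.univ.filter p) (Finset.univ.filter r) := by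
    rw [Finset.disjoint_left]
    intro a ha hb
    exact hdis a (Finset.mem_filter.1 ha).2 (Finset.mem_filter.1 hb).2
  have hun : (Finset.univ.filter p) ∪ (Finset.univ.filter r) = Finset.univ := by
    apply Finset.eq_univ_of_card
    rw [Finset.card_union_of_disjoint hdisj, hcard]
  intro a
  have : a ∈ (Finset.univ.filter p) ∪ (Finset.univ.filter r) := by
    rw [hun]; exact Finset.mem_univ a
  rcases Finset.mem_union.1 this with h | h
  · exact Or.inl (Finset.mem_filter.1 h).2
  · exact Or.inr (Finset.mem_filter.1 h).2

lemma ft_eq {q n : ℕ} [NeZero q] (f : (Fin n → ZMod q) → ℝ) (ω : Fin n → ZMod q) :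
    ft f ω = ∑ x : Fin n → ZMod q, (f x : ℂ) * ∏ i, ZMod.stdAddChar (ω i * x i) := by
  unfold ft
  refine Finset.sum_congr rfl fun x _ => ?_
  rw [← chi_sum, ZMod.stdAddChar_apply, ZMod.toCircle_apply]


lemma psi_pair (q : ℕ) [NeZero q] (hodd : Odd q) (hq3 : 3 ≤ q) :
    ZMod.stdAddChar ((((q - 1) / 2 : ℕ) : ZMod q))
      + ZMod.stdAddChar (-(((q - 1) / 2 : ℕ) : ZMod q))
      = ((-2 * Real.cos (π / q) : ℝ) : ℂ) := by
  set k : ℕ := (q - 1) / 2 with hkdef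
  have hk2 : 2 * k = q - 1 := Nat.mul_div_cancel' (Even.two_dvd (Nat.Odd.sub_odd hodd odd_one))
  have hq0 : (q : ℝ) ≠ 0 := by positivity
  have hkR : (k : ℝ) = ((q : ℝ) - 1) / 2 := by
    have h1 : (1:ℕ) ≤ q := by omega
    have := congrArg (Nat.cast : ℕ → ℝ) hk2
    push_cast [Nat.cast_sub h1] at this
    linarith
  have e1 := ZMod.stdAddChar_coe (N := q) (k : ℤ)
  have e2 := ZMod.stdAddChar_coe (N := q) (-(k : ℤ))
  rw [show ((k : ℕ) : ZMod q) = (((k : ℤ) : ZMod q)) by push_cast; ring,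
      show -(((k : ℤ)) : ZMod q) = (((-(k:ℤ) : ℤ) : ZMod q)) by push_cast; ring, e1, e2]
  have harg : (2 * π * (k:ℝ) / q : ℝ) = π - π / q := by
    rw [hkR]; field_simp
  calc Complex.exp (2 * ↑π * Complex.I * ((k:ℤ):ℂ) / ↑q)
        + Complex.exp (2 * ↑π * Complex.I * ((-(k:ℤ) : ℤ):ℂ) / ↑q)
      = 2 * Complex.cos (((2 * π * (k:ℝ) / q : ℝ) : ℂ)) := by
        rw [Complex.cos,
          show (((2 * π * (k:ℝ) / q : ℝ)) : ℂ) * Complex.I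
              = 2 * ↑π * Complex.I * ((k:ℤ):ℂ) / ↑q by push_cast; ring,
          show -((((2 * π * (k:ℝ) / q : ℝ)) : ℂ)) * Complex.I
              = 2 * ↑π * Complex.I * ((-(k:ℤ) : ℤ):ℂ) / ↑q by push_cast; ring]
        ring
    _ = ((-2 * Real.cos (π / q) : ℝ) : ℂ) := by
        rw [← Complex.ofReal_cos, harg, Real.cos_pi_sub]; push_cast; ring

theorem stmt10 (q n ℓ u : ℕ) [NeZero q] (hodd : Odd q) (hq3 : 3 ≤ q)
    (hℓ : ℓ ≤ n) (hu : u ≤ n)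
    (c : ZMod q) (hc : c = (((q - 1) / 2 : ℕ) : ZMod q))
    (x : Fin n → ZMod q)
    (hx1 : (Finset.univ.filter fun i => x i = 1 ∨ x i = -1).card = u)
    (hx0 : (Finset.univ.filter fun i => x i = 0).card = n - u) :
    ft (sphInd n ℓ c) x =
      ((∑ j ∈ Finset.range (ℓ + 1),
        (u.choose j : ℝ) * ((n - u).choose (ℓ - j) : ℝ) * (-1) ^ j * 2 ^ ℓ *
          Real.cos (π / q) ^ j : ℝ) : ℂ) ∧
    ft (sphInd n ℓ c) x =
      (((2 * Real.cos (π / q)) ^ ℓ * Kr n ℓ u (1 + 1 / Real.cos (π / q)) : ℝ) : ℂ) := by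
  classical
  haveI : Fact (1 < q) := ⟨by omega⟩
  have hq2 : q % 2 = 1 := Nat.odd_iff.mp hodd
  set k : ℕ := (q - 1) / 2 with hkdef
  -- basic facts about c
  have hc0 : c ≠ 0 := by
    rw [hc]
    intro h
    rw [ZMod.natCast_eq_zero_iff] at h
    have := Nat.le_of_dvd (by omega) h
    omega
  have hcc : -c ≠ c := by
    intro h
    have h2 : (((k + k : ℕ)) : ZMod q) = 0 := by
      push_cast
      rw [← hc]
      nth_rewrite 1 [← h]
      exact neg_add_cancel c
    rw [ZMod.natCast_eq_zero_iff] at h2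
    have := Nat.le_of_dvd (by omega) h2
    omega
  have hc0' : -c ≠ 0 := fun h => hc0 (neg_eq_zero.mp h)
  have h0c : (0 : ZMod q) ≠ c := Ne.symm hc0
  have h0c' : (0 : ZMod q) ≠ -c := Ne.symm hc0'
  have hcne : c ≠ -c := Ne.symm hcc
  -- x coordinates cover
  have hxcover : ∀ i, (x i = 1 ∨ x i = -1) ∨ x i = 0 := by
    apply cover
    · intro i h h0
      rcases h with h | h
      · exact one_ne_zero (h ▸ h0 : (1 : ZMod q) = 0)
      · exact one_ne_zero (neg_eq_zero.mp (h ▸ h0 : (-1 : ZMod q) = 0))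
    · rw [hx1, hx0, Fintype.card_fin]
      omega
  set A : Finset (Fin n) := Finset.univ.filter (fun i => x i = 1 ∨ x i = -1) with hAdef
  set B : Finset (Fin n) := Finset.univ.filter (fun i => x i = 0) with hBdef
  have hABdis : Disjoint A B := by
    rw [Finset.disjoint_left]
    intro i hiA hiB
    have h0 := (Finset.mem_filter.1 hiB).2
    rcases (Finset.mem_filter.1 hiA).2 with h | h
    · exact one_ne_zero (h ▸ h0 : (1 : ZMod q) = 0)
    · exact one_ne_zero (neg_eq_zero.mp (h ▸ h0 : (-1 : ZMod q) = 0))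
  have hABun : A ∪ B = Finset.univ := by
    apply Finset.eq_univ_of_card
    rw [Finset.card_union_of_disjoint hABdis, hx1, hx0, Fintype.card_fin]
    omega
  set ψ : AddChar (ZMod q) ℂ := ZMod.stdAddChar with hψdef
  set w1 : ℂ := ((-2 * Real.cos (π / q) : ℝ) : ℂ) with hw1def
  -- values of the local weight
  set Wc : ZMod q → ℂ := fun a => ψ (a * c) + ψ (a * -c) with hWdef
  have hW1 : ∀ i ∈ A, Wc (x i) = w1 := by
    intro i hiA
    have hp := psi_pair q hodd hq3
    rcases (Finset.mem_filter.1 hiA).2 with h | h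
    · simp only [hWdef, h, one_mul]
      rw [hc, hw1def, ← hp]
    · simp only [hWdef, h, neg_one_mul, neg_neg]
      rw [hc, hw1def, ← hp, add_comm]
  have hW0 : ∀ i ∈ B, Wc (x i) = 2 := by
    intro i hiB
    have h := (Finset.mem_filter.1 hiB).2
    simp only [hWdef, h, zero_mul]
    rw [AddChar.map_zero_eq_one]
    norm_num
  -- the sphere predicate
  set P : (Fin n → ZMod q) → Prop := fun y =>
    (Finset.univ.filter fun i => y i = c ∨ y i = -c).card = ℓ ∧
    (Finset.univ.filter fun i => y i = 0).card = n - ℓ with hPdef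
  -- step 1
  have step1 : ft (sphInd n ℓ c) x
      = ∑ y ∈ Finset.univ.filter P, ∏ i, ψ (x i * y i) := by
    rw [ft_eq, Finset.sum_filter]
    refine Finset.sum_congr rfl fun y _ => ?_
    unfold sphInd
    by_cases h : P y
    · rw [if_pos h, if_pos h]; norm_num; rfl
    · rw [if_neg h, if_neg h]; norm_num
  -- the parametrization
  set toY : (Σ _ : Finset (Fin n), Finset (Fin n)) → (Fin n → ZMod q) :=
    fun p => fun i => if i ∈ p.2 then c else if i ∈ p.1 then -c else 0 with htoYdef
  set toP : (Fin n → ZMod q) → (Σ _ : Finset (Fin n), Finset (Fin n)) :=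
    fun y => ⟨Finset.univ.filter (fun i => y i = c ∨ y i = -c),
      Finset.univ.filter (fun i => y i = c)⟩ with htoPdef
  have hycover : ∀ y, P y → ∀ i, (y i = c ∨ y i = -c) ∨ y i = 0 := by
    intro y hy
    apply cover
    · intro i h h0
      rcases h with h | h
      · exact hc0 (h ▸ h0 : c = 0)
      · exact hc0' (h ▸ h0 : -c = 0)
    · rw [hy.1, hy.2, Fintype.card_fin]; omega
  have hYP : ∀ y, P y → toY (toP y) = y := by
    intro y hy
    funext i
    simp only [htoYdef, htoPdef, Finset.mem_filter, Finset.mem_univ, true_and]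
    by_cases h1 : y i = c
    · rw [if_pos h1, h1]
    · rw [if_neg h1]
      by_cases h2 : y i = -c
      · rw [if_pos (Or.inr h2), h2]
      · rw [if_neg (fun h => h.elim h1 h2)]
        rcases hycover y hy i with h | h
        · exact absurd h (fun h => h.elim h1 h2)
        · rw [h]
  have step2 : ∑ y ∈ Finset.univ.filter P, ∏ i, ψ (x i * y i)
      = ∑ p ∈ (Finset.powersetCard ℓ (Finset.univ : Finset (Fin n))).sigma
          (fun T => T.powerset), ∏ i, ψ (x i * toY p i) := by
    refine Finset.sum_nbij' toP toY ?_ ?_ ?_ ?_ ?_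
    · intro y hy
      have hPy := (Finset.mem_filter.1 hy).2
      rw [Finset.mem_sigma]
      constructor
      · exact Finset.mem_powersetCard.2 ⟨Finset.subset_univ _, hPy.1⟩
      · exact Finset.mem_powerset.2 (fun i hi => Finset.mem_filter.2
          ⟨Finset.mem_univ _, Or.inl (Finset.mem_filter.1 hi).2⟩)
    · intro p hp
      rw [Finset.mem_sigma] at hp
      obtain ⟨hT, hS⟩ := hp
      rw [Finset.mem_powersetCard] at hT
      rw [Finset.mem_powerset] at hS
      refine Finset.mem_filter.2 ⟨Finset.mem_univ _, ?_, ?_⟩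
      · have : (Finset.univ.filter fun i => toY p i = c ∨ toY p i = -c) = p.1 := by
          ext i
          simp only [Finset.mem_filter, Finset.mem_univ, true_and, htoYdef]
          by_cases h2 : i ∈ p.2
          · simp [h2, hS h2]
          · by_cases h1 : i ∈ p.1
            · simp [h2, h1]
            · simp [h2, h1, h0c, h0c']
        rw [this, hT.2]
      · have : (Finset.univ.filter fun i => toY p i = 0) = (Finset.univ \ p.1) := by
          ext i
          simp only [Finset.mem_filter, Finset.mem_univ, true_and, Finset.mem_sdiff, htoYdef]
          by_cases h2 : i ∈ p.2
          · simp [h2, hS h2, hc0]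
          · by_cases h1 : i ∈ p.1
            · simp [h2, h1, hc0']
            · simp [h2, h1]
        rw [this, Finset.card_sdiff_of_subset (Finset.subset_univ _), Finset.card_univ,
          Fintype.card_fin, hT.2]
    · intro y hy
      exact hYP y (Finset.mem_filter.1 hy).2
    · intro p hp
      rw [Finset.mem_sigma] at hp
      obtain ⟨hT, hS⟩ := hp
      rw [Finset.mem_powersetCard] at hT
      rw [Finset.mem_powerset] at hS
      obtain ⟨T, S⟩ := p
      simp only [htoPdef, htoYdef] at *
      refine Sigma.ext ?_ (heq_of_eq ?_)
      · ext i
        simp only [Finset.mem_filter, Finset.mem_univ, true_and]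
        by_cases h2 : i ∈ S
        · simp [h2, hS h2]
        · by_cases h1 : i ∈ T
          · simp [h2, h1]
          · simp [h2, h1, h0c, h0c']
      · ext i
        simp only [Finset.mem_filter, Finset.mem_univ, true_and]
        by_cases h2 : i ∈ S
        · simp [h2]
        · by_cases h1 : i ∈ T
          · simp [h2, h1, hcc]
          · simp [h2, h1, Ne.symm hc0]
    · intro y hy
      have := hYP y (Finset.mem_filter.1 hy).2
      rw [this]
  -- step 3 : expand inner sums into products of weights
  have step3 : ∑ p ∈ (Finset.powersetCard ℓ (Finset.univ : Finset (Fin n))).sigma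
          (fun T => T.powerset), ∏ i, ψ (x i * toY p i)
      = ∑ T ∈ Finset.powersetCard ℓ (Finset.univ : Finset (Fin n)), ∏ i ∈ T, Wc (x i) := by
    rw [Finset.sum_sigma]
    refine Finset.sum_congr rfl fun T hT => ?_
    rw [Finset.mem_powersetCard] at hT
    have hprodadd : ∏ i ∈ T, Wc (x i)
        = ∑ S ∈ T.powerset, (∏ i ∈ S, ψ (x i * c)) * ∏ i ∈ T \ S, ψ (x i * -c) :=
      Finset.prod_add _ _ T
    rw [hprodadd]
    refine Finset.sum_congr rfl fun S hS => ?_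
    rw [Finset.mem_powerset] at hS
    have h1 : ∏ i, ψ (x i * toY ⟨T, S⟩ i) = ∏ i ∈ T, ψ (x i * toY ⟨T, S⟩ i) := by
      symm
      apply Finset.prod_subset (Finset.subset_univ T)
      intro i _ hiT
      have : toY ⟨T, S⟩ i = 0 := by
        simp only [htoYdef]
        rw [if_neg (fun h => hiT (hS h)), if_neg hiT]
      rw [this, mul_zero, AddChar.map_zero_eq_one]
    rw [h1, ← Finset.prod_sdiff hS, mul_comm]
    congr 1
    · refine Finset.prod_congr rfl fun i hi => ?_
      simp only [htoYdef]
      rw [if_pos hi]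
    · refine Finset.prod_congr rfl fun i hi => ?_
      rw [Finset.mem_sdiff] at hi
      simp only [htoYdef]
      rw [if_neg hi.2, if_pos hi.1]
  -- step 4 : evaluate weights
  have step4 : ∀ T ∈ Finset.powersetCard ℓ (Finset.univ : Finset (Fin n)),
      ∏ i ∈ T, Wc (x i) = w1 ^ (T ∩ A).card * 2 ^ (T ∩ B).card := by
    intro T hT
    have hTun : (T ∩ A) ∪ (T ∩ B) = T := by
      rw [← Finset.inter_union_distrib_left, hABun, Finset.inter_univ]
    have hdis' : Disjoint (T ∩ A) (T ∩ B) :=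
      hABdis.mono (Finset.inter_subset_right) (Finset.inter_subset_right)
    have hre : ∏ i ∈ T, Wc (x i) = ∏ i ∈ (T ∩ A) ∪ (T ∩ B), Wc (x i) := by rw [hTun]
    rw [hre, Finset.prod_union hdis']
    congr 1
    · rw [Finset.prod_congr rfl (fun i hi => hW1 i (Finset.mem_inter.1 hi).2),
        Finset.prod_const]
    · rw [Finset.prod_congr rfl (fun i hi => hW0 i (Finset.mem_inter.1 hi).2),
        Finset.prod_const]
  -- step 5 : count
  have step5 : ∑ T ∈ Finset.powersetCard ℓ (Finset.univ : Finset (Fin n)),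
        w1 ^ (T ∩ A).card * 2 ^ (T ∩ B).card
      = ∑ j ∈ Finset.range (ℓ + 1),
          ((u.choose j * (n - u).choose (ℓ - j) : ℕ) : ℂ) * (w1 ^ j * 2 ^ (ℓ - j)) := by
    have hcardT : ∀ T ∈ Finset.powersetCard ℓ (Finset.univ : Finset (Fin n)),
        (T ∩ A).card + (T ∩ B).card = ℓ := by
      intro T hT
      rw [Finset.mem_powersetCard] at hT
      have hTun : (T ∩ A) ∪ (T ∩ B) = T := by
        rw [← Finset.inter_union_distrib_left, hABun, Finset.inter_univ]
      have hdis' : Disjoint (T ∩ A) (T ∩ B) :=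
        hABdis.mono (Finset.inter_subset_right) (Finset.inter_subset_right)
      rw [← Finset.card_union_of_disjoint hdis', hTun, hT.2]
    have hbij : ∑ T ∈ Finset.powersetCard ℓ (Finset.univ : Finset (Fin n)),
          w1 ^ (T ∩ A).card * 2 ^ (T ∩ B).card
        = ∑ p ∈ (Finset.range (ℓ + 1)).sigma
            (fun j => Finset.powersetCard j A ×ˢ Finset.powersetCard (ℓ - j) B),
            w1 ^ p.1 * 2 ^ (ℓ - p.1) := by
      refine Finset.sum_nbij' (fun T => ⟨(T ∩ A).card, (T ∩ A, T ∩ B)⟩)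
        (fun p => p.2.1 ∪ p.2.2) ?_ ?_ ?_ ?_ ?_
      · intro T hT
        have hc' := hcardT T hT
        rw [Finset.mem_sigma, Finset.mem_range, Finset.mem_product]
        dsimp only
        refine ⟨by omega, Finset.mem_powersetCard.2 ⟨Finset.inter_subset_right, rfl⟩,
          Finset.mem_powersetCard.2 ⟨Finset.inter_subset_right, by omega⟩⟩
      · intro p hp
        rw [Finset.mem_sigma, Finset.mem_range, Finset.mem_product] at hp
        obtain ⟨hj, h1, h2⟩ := hp
        rw [Finset.mem_powersetCard] at h1 h2
        have hdisj : Disjoint p.2.1 p.2.2 := hABdis.mono h1.1 h2.1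
        rw [Finset.mem_powersetCard]
        refine ⟨Finset.subset_univ _, ?_⟩
        rw [Finset.card_union_of_disjoint hdisj, h1.2, h2.2]
        omega
      · intro T hT
        dsimp only
        rw [← Finset.inter_union_distrib_left, hABun, Finset.inter_univ]
      · intro p hp
        rw [Finset.mem_sigma, Finset.mem_range, Finset.mem_product] at hp
        obtain ⟨hj, h1, h2⟩ := hp
        rw [Finset.mem_powersetCard] at h1 h2
        have e1 : (p.2.1 ∪ p.2.2) ∩ A = p.2.1 := by
          rw [Finset.union_inter_distrib_right, Finset.inter_eq_left.2 h1.1,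
            (Finset.disjoint_iff_inter_eq_empty.1 (hABdis.symm.mono_left h2.1)),
            Finset.union_empty]
        have e2 : (p.2.1 ∪ p.2.2) ∩ B = p.2.2 := by
          rw [Finset.union_inter_distrib_right, Finset.inter_eq_left.2 h2.1,
            (Finset.disjoint_iff_inter_eq_empty.1 (hABdis.mono_left h1.1)),
            Finset.empty_union]
        obtain ⟨j, S1, S2⟩ := p
        simp only at e1 e2 ⊢
        refine Sigma.ext ?_ (heq_of_eq ?_)
        · simp only [e1]; exact h1.2
        · simp only [e1, e2]
      · intro T hT
        have hc' := hcardT T hT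
        dsimp only
        congr 2
        omega
    rw [hbij, Finset.sum_sigma]
    refine Finset.sum_congr rfl fun j hj => ?_
    dsimp only
    rw [Finset.sum_const, Finset.card_product, Finset.card_powersetCard,
      Finset.card_powersetCard]
    have hAcard : A.card = u := hx1
    have hBcard : B.card = n - u := hx0
    rw [hAcard, hBcard, nsmul_eq_mul]
  -- combine
  have key : ft (sphInd n ℓ c) x
      = ∑ j ∈ Finset.range (ℓ + 1),
          ((u.choose j * (n - u).choose (ℓ - j) : ℕ) : ℂ) * (w1 ^ j * 2 ^ (ℓ - j)) := by
    rw [step1, step2, step3, Finset.sum_congr rfl step4, step5]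
  -- positivity of cos
  have hcospos : 0 < Real.cos (π / q) := by
    apply Real.cos_pos_of_mem_Ioo
    constructor
    · have : 0 < π / q := by positivity
      linarith [Real.pi_pos]
    · apply div_lt_div_of_pos_left Real.pi_pos (by norm_num)
      exact_mod_cast by omega
  have goal1 : ft (sphInd n ℓ c) x =
      ((∑ j ∈ Finset.range (ℓ + 1),
        (u.choose j : ℝ) * ((n - u).choose (ℓ - j) : ℝ) * (-1) ^ j * 2 ^ ℓ *
          Real.cos (π / q) ^ j : ℝ) : ℂ) := by
    rw [key, Complex.ofReal_sum]
    refine Finset.sum_congr rfl fun j hj => ?_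
    rw [Finset.mem_range] at hj
    have hjℓ : j ≤ ℓ := by omega
    have h2 : (2 : ℂ) ^ ℓ = 2 ^ j * 2 ^ (ℓ - j) := by
      rw [← pow_add]; congr 1; omega
    rw [hw1def]
    push_cast
    rw [h2]
    ring_nf
    rw [show ((-2 : ℂ)) = (-1) * 2 by norm_num]
    rw [mul_pow]
    ring
  refine ⟨goal1, ?_⟩
  rw [goal1]
  congr 1
  unfold Kr
  rw [Finset.mul_sum]
  refine Finset.sum_congr rfl fun j hj => ?_
  rw [Finset.mem_range] at hj
  have hjℓ : j ≤ ℓ := by omega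
  have hcos0 : Real.cos (π / q) ≠ 0 := ne_of_gt hcospos
  have hpow : Real.cos (π / q) ^ ℓ = Real.cos (π / q) ^ j * Real.cos (π / q) ^ (ℓ - j) := by
    rw [← pow_add]; congr 1; omega
  have harg : (1 + 1 / Real.cos (π / q) - 1) = 1 / Real.cos (π / q) := by ring
  rw [harg, mul_pow, hpow, div_pow, one_pow]
  field_simp
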